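/- The group G with presentation ⟨a₁, a₂, b₁, b₂ | [a₁,a₂] = [b₁,b₂] = [a₁,b₁] = [a₁,b₂] = [b₁,a₂] = 1⟩ is isomorphic to the direct product ℤ² × F₂, where F₂ is the free group of rank two, via an isomorphism sending a₁, b₁ to the two standard generators of ℤ² and a₂, b₂ to the two free generators of F₂. -/

import Mathlib

/-- Generators of Birman's presentation of π₁ of the configuration space of two
ordered points on the torus. -/
inductive BirmanGen : Type
  | a1 | a2 | b1 | b2

open FreeGroup in
open scoped commutatorElement in
/-- The relators [a₁,a₂], [b₁,b₂], [a₁,b₁], [a₁,b₂], [b₁,a₂]. -/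
def birmanRels : Set (FreeGroup BirmanGen) :=
  {⁅of BirmanGen.a1, of BirmanGen.a2⁆, ⁅of BirmanGen.b1, of BirmanGen.b2⁆,
   ⁅of BirmanGen.a1, of BirmanGen.b1⁆, ⁅of BirmanGen.a1, of BirmanGen.b2⁆,
   ⁅of BirmanGen.b1, of BirmanGen.a2⁆}

namespace BirmanAux

open BirmanGen
open scoped commutatorElement

abbrev G := PresentedGroup birmanRels
abbrev T := Multiplicative (ℤ × ℤ) × FreeGroup Bool

/-- target of generators -/
def tgt : BirmanGen → T
  | a1 => (Multiplicative.ofAdd ((1, 0) : ℤ × ℤ), 1)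
  | b1 => (Multiplicative.ofAdd ((0, 1) : ℤ × ℤ), 1)
  | a2 => (1, FreeGroup.of false)
  | b2 => (1, FreeGroup.of true)

lemma rels_hold : ∀ r ∈ birmanRels, FreeGroup.lift tgt r = 1 := by
  intro r hr
  have key : ∀ x y : BirmanGen, Commute (tgt x) (tgt y) →
      FreeGroup.lift tgt ⁅FreeGroup.of x, FreeGroup.of y⁆ = 1 := by
    intro x y h
    rw [map_commutatorElement, FreeGroup.lift_apply_of, FreeGroup.lift_apply_of,
      commutatorElement_eq_one_iff_commute]
    exact h
  rcases hr with h | h | h | h | h <;> subst h <;> apply key <;>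
    exact Commute.prod (mul_comm _ _) (by simp [tgt])

/-- the forward homomorphism -/
def fwd : G →* T := PresentedGroup.toGroup rels_hold

lemma comm_of_rel {x y : BirmanGen} (h : ⁅FreeGroup.of x, FreeGroup.of y⁆ ∈ birmanRels) :
    Commute (PresentedGroup.of x : G) (PresentedGroup.of y) := by
  rw [← commutatorElement_eq_one_iff_commute]
  have h1 : (PresentedGroup.mk birmanRels) ⁅FreeGroup.of x, FreeGroup.of y⁆ = 1 :=
    (QuotientGroup.eq_one_iff _).2 (Subgroup.subset_normalClosure h)
  rwa [map_commutatorElement] at h1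

lemma a1b1 : Commute (PresentedGroup.of a1 : G) (PresentedGroup.of b1) :=
  comm_of_rel (by simp [birmanRels])

lemma a1_central (x : G) : Commute (PresentedGroup.of a1 : G) x := by
  have : x ∈ Subgroup.centralizer {(PresentedGroup.of a1 : G)} := by
    refine PresentedGroup.generated_by _ _ (fun j => ?_) x
    rw [Subgroup.mem_centralizer_iff]
    rintro h rfl
    cases j
    · rfl
    · exact (comm_of_rel (by simp [birmanRels]) : Commute _ (PresentedGroup.of a2)).eq
    · exact a1b1.eq
    · exact (comm_of_rel (by simp [birmanRels]) : Commute _ (PresentedGroup.of b2)).eq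
  exact Subgroup.mem_centralizer_iff.1 this _ rfl


lemma b1_central (x : G) : Commute (PresentedGroup.of b1 : G) x := by
  have : x ∈ Subgroup.centralizer {(PresentedGroup.of b1 : G)} := by
    refine PresentedGroup.generated_by _ _ (fun j => ?_) x
    rw [Subgroup.mem_centralizer_iff]
    rintro h rfl
    cases j
    · exact a1b1.symm.eq
    · exact (comm_of_rel (by simp [birmanRels]) : Commute _ (PresentedGroup.of a2)).eq
    · rfl
    · exact (comm_of_rel (by simp [birmanRels]) : Commute _ (PresentedGroup.of b2)).eq
  exact Subgroup.mem_centralizer_iff.1 this _ rfl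

/-- ℤ² → G -/
def phi : Multiplicative (ℤ × ℤ) →* G where
  toFun x := PresentedGroup.of a1 ^ (Multiplicative.toAdd x).1 *
    PresentedGroup.of b1 ^ (Multiplicative.toAdd x).2
  map_one' := by simp
  map_mul' x y := by
    show PresentedGroup.of a1 ^ ((Multiplicative.toAdd x).1 + (Multiplicative.toAdd y).1) *
      PresentedGroup.of b1 ^ ((Multiplicative.toAdd x).2 + (Multiplicative.toAdd y).2) = _
    rw [zpow_add, zpow_add, (a1b1.symm.zpow_zpow _ _).mul_mul_mul_comm]

/-- F₂ → G -/
def psi : FreeGroup Bool →* G :=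
  FreeGroup.lift (fun b => bif b then PresentedGroup.of b2 else PresentedGroup.of a2)

/-- the inverse homomorphism -/
def bwd : T →* G :=
  MonoidHom.noncommCoprod phi psi (fun m n =>
    ((a1_central (psi n)).zpow_left _).mul_left ((b1_central (psi n)).zpow_left _))

lemma fwd_of (x : BirmanGen) : fwd (PresentedGroup.of x) = tgt x := PresentedGroup.toGroup.of _

lemma bwd_fwd : (bwd.comp fwd) = MonoidHom.id G := by
  ext x
  rw [MonoidHom.comp_apply, fwd_of]
  cases x <;>
    simp [tgt, bwd, phi, psi, MonoidHom.noncommCoprod_apply]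

lemma fwd_psi (n : FreeGroup Bool) : fwd (psi n) = (1, n) := by
  have : fwd.comp psi = MonoidHom.inr (Multiplicative (ℤ × ℤ)) (FreeGroup Bool) := by
    apply FreeGroup.ext_hom
    intro b
    cases b <;> simp [psi, fwd_of, tgt]
  exact DFunLike.congr_fun this n

lemma fwd_phi (m : Multiplicative (ℤ × ℤ)) : fwd (phi m) = (m, 1) := by
  show fwd (PresentedGroup.of a1 ^ (Multiplicative.toAdd m).1 *
    PresentedGroup.of b1 ^ (Multiplicative.toAdd m).2) = (m, 1)
  rw [map_mul, map_zpow, map_zpow, fwd_of, fwd_of]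
  simp only [tgt, Prod.pow_def, Prod.mul_def, one_zpow, mul_one]
  congr 1
  rw [← ofAdd_zsmul, ← ofAdd_zsmul, ← ofAdd_add]
  simp [Prod.ext_iff]

lemma fwd_bwd : (fwd.comp bwd) = MonoidHom.id T := by
  refine MonoidHom.ext fun x => ?_
  rcases x with ⟨m, n⟩
  show fwd (phi m * psi n) = (m, n)
  rw [map_mul, fwd_phi, fwd_psi, Prod.mul_def, mul_one, one_mul]

end BirmanAux

/-- G = ⟨a₁,a₂,b₁,b₂ | [a₁,a₂] = [b₁,b₂] = [a₁,b₁] = [a₁,b₂] = [b₁,a₂] = 1⟩ is isomorphic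
to ℤ² × F₂ via an isomorphism sending a₁, b₁ to the standard generators of ℤ² and
a₂, b₂ to the free generators of F₂. -/
theorem stmt_10 :
    ∃ e : PresentedGroup birmanRels ≃* Multiplicative (ℤ × ℤ) × FreeGroup Bool,
      e (PresentedGroup.of BirmanGen.a1) = (Multiplicative.ofAdd ((1, 0) : ℤ × ℤ), 1) ∧
      e (PresentedGroup.of BirmanGen.b1) = (Multiplicative.ofAdd ((0, 1) : ℤ × ℤ), 1) ∧
      e (PresentedGroup.of BirmanGen.a2) = (1, FreeGroup.of false) ∧
      e (PresentedGroup.of BirmanGen.b2) = (1, FreeGroup.of true) := by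
  refine ⟨⟨⟨BirmanAux.fwd, BirmanAux.bwd, fun x => ?_, fun x => ?_⟩, map_mul _⟩, ?_, ?_, ?_, ?_⟩
  · exact DFunLike.congr_fun BirmanAux.bwd_fwd x
  · exact DFunLike.congr_fun BirmanAux.fwd_bwd x
  all_goals exact BirmanAux.fwd_of _
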